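/- Let γ > 0, λ₁ > 0, and let p, q be probability densities with ⟨p^{1+γ}⟩ < ∞ and ⟨q p^γ⟩ < ∞. Then the pseudo-spherical-type bridge density power cross-entropy converges, as λ₂ → 0⁺, to a positive constant multiple of the density power cross-entropy: lim_{λ₂→0⁺} d^{BDP}_{(λ₁,λ₂),γ}(q,p) = (λ₁^{−γ/(1+γ)}/(1+γ))·d^{DP}_γ(q,p). -/

import Mathlib

open MeasureTheory Filter Real Topology Set

/-- A probability density w.r.t. a measure `ν`: measurable, nonnegative, integrating to 1. -/
def IsProbDensity {X : Type*} [MeasurableSpace X] (ν : Measure X) (p : X → ℝ) : Prop :=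
  Measurable p ∧ (∀ x, 0 ≤ p x) ∧ ∫ x, p x ∂ν = 1

/-- `⟨f^{1+γ}⟩ = ∫ f(x)^{1+γ} dν`. -/
noncomputable def powInt {X : Type*} [MeasurableSpace X] (ν : Measure X) (γ : ℝ) (p : X → ℝ) : ℝ :=
  ∫ x, p x ^ (1 + γ) ∂ν

/-- `⟨q p^γ⟩ = ∫ q(x) p(x)^γ dν`. -/
noncomputable def crossInt {X : Type*} [MeasurableSpace X] (ν : Measure X) (γ : ℝ)
    (q p : X → ℝ) : ℝ :=
  ∫ x, q x * p x ^ γ ∂ν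

/-- `‖f‖_{1+γ} = ⟨f^{1+γ}⟩^{1/(1+γ)}`. -/
noncomputable def lnorm {X : Type*} [MeasurableSpace X] (ν : Measure X) (γ : ℝ) (p : X → ℝ) : ℝ :=
  (powInt ν γ p) ^ (1 / (1 + γ))


/-- The pseudo-spherical-type bridge density power cross-entropy (PS-type BDPCE). -/
noncomputable def dBDP {X : Type*} [MeasurableSpace X] (ν : Measure X) (l1 l2 γ : ℝ)
    (q p : X → ℝ) : ℝ :=
  -(1 / (l2 * γ)) * ((l1 + l2 * crossInt ν γ q p) / (l1 + l2 * powInt ν γ p) ^ (γ / (1 + γ)) -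
    (l1 + l2) ^ ((1:ℝ) / (1 + γ)))

/-- The density power cross-entropy (DPCE):
`d^{DP}_γ(q,p) = −((1+γ)/γ)⟨q p^γ⟩ + 1/γ + ⟨p^{1+γ}⟩`. -/
noncomputable def dDP {X : Type*} [MeasurableSpace X] (ν : Measure X) (γ : ℝ)
    (q p : X → ℝ) : ℝ :=
  -((1 + γ) / γ) * crossInt ν γ q p + 1 / γ + powInt ν γ p

/-- as `λ₂ → 0⁺`, the PS-type BDPCE converges to a positive constant multiple
of the density power cross-entropy. -/
theorem bdpce_tendsto_dpce {X : Type*} [MeasurableSpace X] (ν : Measure X)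
    [SigmaFinite ν] (γ l1 : ℝ) (hγ : 0 < γ) (hl1 : 0 < l1)
    (p q : X → ℝ) (hp : IsProbDensity ν p) (hq : IsProbDensity ν q)
    (hpI : Integrable (fun x => p x ^ (1 + γ)) ν)
    (hqpI : Integrable (fun x => q x * p x ^ γ) ν) :
    Tendsto (fun l2 => dBDP ν l1 l2 γ q p) (𝓝[>] (0:ℝ))
      (𝓝 (l1 ^ (-(γ / (1 + γ))) / (1 + γ) * dDP ν γ q p)) := by

  have h1γ : (0:ℝ) < 1 + γ := by linarith
  have hγ' : γ ≠ 0 := hγ.ne'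
  have h1γ' : (1:ℝ) + γ ≠ 0 := h1γ.ne'
  have hl1' : l1 ≠ 0 := hl1.ne'
  set A := crossInt ν γ q p with hAdef
  set B := powInt ν γ p with hBdef
  set c : ℝ := γ / (1 + γ) with hc
  set d : ℝ := 1 / (1 + γ) with hd
  set g : ℝ → ℝ := fun l2 => (l1 + l2 * A) / (l1 + l2 * B) ^ c - (l1 + l2) ^ d with hg
  -- derivative
  have hu : HasDerivAt (fun l2 : ℝ => l1 + l2 * A) A 0 := by
    simpa using ((hasDerivAt_id (0:ℝ)).mul_const A).const_add l1
  have hv0 : HasDerivAt (fun l2 : ℝ => l1 + l2 * B) B 0 := by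
    simpa using ((hasDerivAt_id (0:ℝ)).mul_const B).const_add l1
  have hne : (l1 + (0:ℝ) * B) ≠ 0 := by simpa using hl1'
  have hv : HasDerivAt (fun l2 : ℝ => (l1 + l2 * B) ^ c)
      (B * c * (l1 + (0:ℝ) * B) ^ (c - 1)) 0 := hv0.rpow_const (Or.inl hne)
  have hvne : ((l1 + (0:ℝ) * B) ^ c) ≠ 0 := by
    simp only [zero_mul, add_zero]
    exact (Real.rpow_pos_of_pos hl1 c).ne'
  have hw0 : HasDerivAt (fun l2 : ℝ => l1 + l2) (1:ℝ) 0 := by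
    simpa using (hasDerivAt_id (0:ℝ)).const_add l1
  have hw : HasDerivAt (fun l2 : ℝ => (l1 + l2) ^ d) (1 * d * (l1 + 0) ^ (d - 1)) 0 :=
    hw0.rpow_const (Or.inl (by simpa using hl1'))
  have hgd : HasDerivAt g
      ((A * (l1 + (0:ℝ) * B) ^ c - (l1 + 0 * A) * (B * c * (l1 + (0:ℝ) * B) ^ (c - 1))) /
        ((l1 + (0:ℝ) * B) ^ c) ^ 2 - 1 * d * (l1 + 0) ^ (d - 1)) 0 :=
    (hu.div hv hvne).sub hw
  set D : ℝ := (A * (l1 + (0:ℝ) * B) ^ c - (l1 + 0 * A) * (B * c * (l1 + (0:ℝ) * B) ^ (c - 1))) /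
        ((l1 + (0:ℝ) * B) ^ c) ^ 2 - 1 * d * (l1 + 0) ^ (d - 1) with hD
  have hg0 : g 0 = 0 := by
    have : l1 / l1 ^ c = l1 ^ d := by
      rw [show l1 / l1 ^ c = l1 ^ (1:ℝ) / l1 ^ c by rw [Real.rpow_one],
        ← Real.rpow_sub hl1]
      congr 1
      linarith [show c + d = 1 by rw [hc, hd, ← add_div, add_comm γ 1, div_self h1γ']]
    simp [hg, this]
  have hslope : Tendsto (fun l2 : ℝ => g l2 / l2) (𝓝[>] (0:ℝ)) (𝓝 D) := by
    have := hasDerivAt_iff_tendsto_slope.mp hgd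
    have h2 : Tendsto (slope g 0) (𝓝[>] (0:ℝ)) (𝓝 D) :=
      this.mono_left (nhdsWithin_mono _ (fun x hx => ne_of_gt hx))
    refine h2.congr (fun x => ?_)
    simp [slope, hg0]
    ring
  have heq : ∀ᶠ l2 in 𝓝[>] (0:ℝ), -(1/γ) * (g l2 / l2) = dBDP ν l1 l2 γ q p := by
    filter_upwards [self_mem_nhdsWithin] with l2 (hl2 : 0 < l2)
    have hbdp : dBDP ν l1 l2 γ q p = -(1/(l2*γ)) * g l2 := rfl
    rw [hbdp]
    generalize g l2 = G
    ring
  have hfinal : -(1/γ) * D = l1 ^ (-(γ / (1 + γ))) / (1 + γ) * dDP ν γ q p := by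
    have e0 : l1 ^ (-(γ / (1 + γ))) = (l1 ^ c)⁻¹ := by
      rw [hc, Real.rpow_neg hl1.le]
    have e1 : l1 ^ (c - 1) = l1 ^ c / l1 := by
      rw [Real.rpow_sub hl1, Real.rpow_one]
    have e2 : l1 ^ (d - 1) = (l1 ^ c)⁻¹ := by
      rw [show d - 1 = -c by linarith [show c + d = 1 by rw [hc, hd, ← add_div, add_comm γ 1, div_self h1γ']], Real.rpow_neg hl1.le]
    have hlc : l1 ^ c ≠ 0 := (Real.rpow_pos_of_pos hl1 c).ne'
    rw [hD]
    simp only [zero_mul, add_zero, mul_one, one_mul, e0, e1, e2]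
    unfold dDP
    rw [← hAdef, ← hBdef]
    rw [hc, hd]
    field_simp
    ring
  rw [← hfinal]
  exact (Tendsto.const_mul _ hslope).congr' heq
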